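/- Let f, g ∈ L¹(μ) with ‖f‖ ≤ 1, ‖g‖ ≤ 1, and suppose ‖f + g‖ > 2 − ε and ‖f − g‖ > 2 − ε for some 0 < ε < 1. Then there exist disjoint measurable sets Ω₁, Ω₂ with ∫_{Ω₁} |g| dμ > (1 − ε)² and ∫_{Ω₂} |f| dμ > (1 − ε)². -/

import Mathlib

open MeasureTheory ENNReal

variable {Ω : Type*} [MeasurableSpace Ω]

/-- The subspace `L¹(A)` of `L¹(μ)`: functions vanishing a.e. off `A`. -/
noncomputable def LoneSub (μ : Measure Ω) (A : Set Ω) : Submodule ℝ (Lp ℝ 1 μ) where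
  carrier := {f | ∀ᵐ x ∂μ, x ∉ A → f x = 0}
  zero_mem' := by
    simp only [Set.mem_setOf_eq]
    filter_upwards [Lp.coeFn_zero ℝ 1 μ] with x hx _
    simpa using hx
  add_mem' := by
    intro f g hf hg
    have : ∀ᵐ x ∂μ, x ∉ A → ((f + g : Lp ℝ 1 μ) : Ω → ℝ) x = 0 := by
      filter_upwards [Lp.coeFn_add f g, hf, hg] with x hx h1 h2 hxA
      rw [hx]
      simp [h1 hxA, h2 hxA]
    exact this
  smul_mem' := by
    intro c f hf
    have : ∀ᵐ x ∂μ, x ∉ A → ((c • f : Lp ℝ 1 μ) : Ω → ℝ) x = 0 := by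
      filter_upwards [Lp.coeFn_smul c f, hf] with x hx h1 hxA
      rw [hx]
      simp [h1 hxA]
    exact this

/-- The normalized indicator function `χ_B / μ(B)` as an element of `L¹(μ)`. -/
noncomputable def normInd (μ : Measure Ω) {B : Set Ω} (hB : MeasurableSet B)
    (hBfin : μ B ≠ ∞) : Lp ℝ 1 μ :=
  indicatorConstLp 1 hB hBfin ((μ B).toReal)⁻¹

lemma dor_abs_id1 (a b : ℝ) (h : |b| ≤ |a|) : |a + b| + |a - b| ≤ 2 * |a| := by
  rcases abs_cases (a+b) with ⟨h1,_⟩|⟨h1,_⟩ <;> rcases abs_cases (a-b) with ⟨h2,_⟩|⟨h2,_⟩ <;>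
    rcases abs_cases a with ⟨h3,_⟩|⟨h3,_⟩ <;> rcases abs_cases b with ⟨h4,_⟩|⟨h4,_⟩ <;> linarith

lemma dor_abs_id2 (a b : ℝ) : |a + b| + |a - b| ≤ 2 * (|a| + |b|) := by
  have := abs_add_le a b
  have := abs_sub a b
  linarith


/-- Dor's theorem (two-function case): nearly extremal sum and difference in
`L¹` force almost disjoint supports. -/
theorem stmt10 (μ : Measure Ω) (f g : Lp ℝ 1 μ) (hf : ‖f‖ ≤ 1) (hg : ‖g‖ ≤ 1)
    {ε : ℝ} (hε0 : 0 < ε) (hε1 : ε < 1)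
    (hsum : ‖f + g‖ > 2 - ε) (hdiff : ‖f - g‖ > 2 - ε) :
    ∃ Ω₁ Ω₂ : Set Ω, MeasurableSet Ω₁ ∧ MeasurableSet Ω₂ ∧ Disjoint Ω₁ Ω₂ ∧
      (∫ x in Ω₁, |(g : Ω → ℝ) x| ∂μ) > (1 - ε) ^ 2 ∧
      (∫ x in Ω₂, |(f : Ω → ℝ) x| ∂μ) > (1 - ε) ^ 2 := by
  
  set F : Ω → ℝ := (f : Ω → ℝ) with hFdef
  set G : Ω → ℝ := (g : Ω → ℝ) with hGdef
  have hFi : Integrable F μ := L1.integrable_coeFn f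
  have hGi : Integrable G μ := L1.integrable_coeFn g
  set h : Ω → ℝ := fun x => 2 * (|F x| + |G x|) - |F x + G x| - |F x - G x| with hhdef
  have hhi : Integrable h μ :=
    (((hFi.abs.add hGi.abs).const_mul 2).sub (hFi.add hGi).abs).sub (hFi.sub hGi).abs
  have hh0 : 0 ≤ᵐ[μ] h := Filter.Eventually.of_forall fun x => by
    have := dor_abs_id2 (F x) (G x); simp only [hhdef, Pi.zero_apply]; linarith
  -- norms as integrals
  have hnf : ‖f‖ = ∫ x, |F x| ∂μ := by
    rw [L1.norm_eq_integral_norm]; simp only [Real.norm_eq_abs]; rfl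
  have hng : ‖g‖ = ∫ x, |G x| ∂μ := by
    rw [L1.norm_eq_integral_norm]; simp only [Real.norm_eq_abs]; rfl
  have hnsum : ‖f + g‖ = ∫ x, |F x + G x| ∂μ := by
    rw [L1.norm_eq_integral_norm]
    refine integral_congr_ae ?_
    filter_upwards [Lp.coeFn_add f g] with x hx
    rw [hx]; simp [Real.norm_eq_abs]; rfl
  have hndiff : ‖f - g‖ = ∫ x, |F x - G x| ∂μ := by
    rw [L1.norm_eq_integral_norm]
    refine integral_congr_ae ?_
    filter_upwards [Lp.coeFn_sub f g] with x hx
    rw [hx]; simp [Real.norm_eq_abs]; rfl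
  have hIh : ∫ x, h x ∂μ = 2 * (‖f‖ + ‖g‖) - ‖f + g‖ - ‖f - g‖ := by
    have i2 : Integrable (fun x => 2 * (|F x| + |G x|) - |F x + G x|) μ :=
      ((hFi.abs.add hGi.abs).const_mul 2).sub (hFi.add hGi).abs
    have e1 : ∫ x, h x ∂μ =
        (∫ x, (2 * (|F x| + |G x|) - |F x + G x|) ∂μ) - ∫ x, |F x - G x| ∂μ :=
      integral_sub i2 (hFi.sub hGi).abs
    have e2 : ∫ x, (2 * (|F x| + |G x|) - |F x + G x|) ∂μ =
        (∫ x, 2 * (|F x| + |G x|) ∂μ) - ∫ x, |F x + G x| ∂μ :=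
      integral_sub ((hFi.abs.add hGi.abs).const_mul 2) (hFi.add hGi).abs
    have e3 : ∫ x, 2 * (|F x| + |G x|) ∂μ = 2 * ∫ x, (|F x| + |G x|) ∂μ :=
      integral_const_mul 2 _
    have e4 : ∫ x, (|F x| + |G x|) ∂μ = (∫ x, |F x| ∂μ) + ∫ x, |G x| ∂μ :=
      integral_add hFi.abs hGi.abs
    rw [e1, e2, e3, e4, hnf, hng, hnsum, hndiff]
  have hIhlt : ∫ x, h x ∂μ < 2 * (‖f‖ + ‖g‖) - (4 - 2 * ε) := by
    rw [hIh]; linarith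
  -- the disjoint sets
  set Ω₂ : Set Ω := {x | |G x| < |F x|} with hΩ₂def
  have hΩ₂m : MeasurableSet Ω₂ :=
    measurableSet_lt ((Lp.stronglyMeasurable g).measurable.abs)
      ((Lp.stronglyMeasurable f).measurable.abs)
  refine ⟨Ω₂ᶜ, Ω₂, hΩ₂m.compl, hΩ₂m, disjoint_compl_left, ?_, ?_⟩
  · -- ∫_{Ω₂ᶜ} |G|
    have h1 : ∫ x in Ω₂, 2 * |G x| ∂μ ≤ ∫ x in Ω₂, h x ∂μ := by
      refine setIntegral_mono_on (hGi.abs.const_mul 2).integrableOn hhi.integrableOn hΩ₂m ?_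
      intro x hx
      have hx' : |G x| ≤ |F x| := le_of_lt hx
      have := dor_abs_id1 (F x) (G x) hx'
      simp only [hhdef]; linarith
    have h2 : ∫ x in Ω₂, h x ∂μ ≤ ∫ x, h x ∂μ := setIntegral_le_integral hhi hh0
    have h3 : ∫ x in Ω₂, 2 * |G x| ∂μ = 2 * ∫ x in Ω₂, |G x| ∂μ := integral_const_mul 2 _
    have h4 : (∫ x in Ω₂, |G x| ∂μ) + ∫ x in Ω₂ᶜ, |G x| ∂μ = ∫ x, |G x| ∂μ :=
      integral_add_compl hΩ₂m hGi.abs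
    have hsq : (1 - ε) ^ 2 < 1 - ε := by nlinarith
    have : ∫ x in Ω₂ᶜ, |G x| ∂μ > 1 - ε := by
      rw [← hng] at h4; nlinarith
    linarith
  · -- ∫_{Ω₂} |F|
    have h1 : ∫ x in Ω₂ᶜ, 2 * |F x| ∂μ ≤ ∫ x in Ω₂ᶜ, h x ∂μ := by
      refine setIntegral_mono_on (hFi.abs.const_mul 2).integrableOn hhi.integrableOn
        hΩ₂m.compl ?_
      intro x hx
      have hx' : |F x| ≤ |G x| := not_lt.mp hx
      have := dor_abs_id1 (G x) (F x) hx'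
      have e1 : |G x + F x| = |F x + G x| := by rw [add_comm]
      have e2 : |G x - F x| = |F x - G x| := abs_sub_comm _ _
      rw [e1, e2] at this
      simp only [hhdef]; linarith
    have h2 : ∫ x in Ω₂ᶜ, h x ∂μ ≤ ∫ x, h x ∂μ := setIntegral_le_integral hhi hh0
    have h3 : ∫ x in Ω₂ᶜ, 2 * |F x| ∂μ = 2 * ∫ x in Ω₂ᶜ, |F x| ∂μ := integral_const_mul 2 _
    have h4 : (∫ x in Ω₂, |F x| ∂μ) + ∫ x in Ω₂ᶜ, |F x| ∂μ = ∫ x, |F x| ∂μ :=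
      integral_add_compl hΩ₂m hFi.abs
    have hsq : (1 - ε) ^ 2 < 1 - ε := by nlinarith
    have : ∫ x in Ω₂, |F x| ∂μ > 1 - ε := by
      rw [← hnf] at h4; nlinarith
    linarith
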